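/- arXiv:1705.03433 — 2 statements merged into one kernel-verified Lean document; each statement's English description precedes it below -/
import Mathlib

section
/- Let J be the augmentation ideal of ℂ[X]° (kernel of evaluation at 1 restricted to the finite dual), and let ε, φ_1, ξ ∈ ℂ[X]° be as above. Then φ_1 - ε ∉ J², even though φ_1 - ε - ξ lies in I² ∩ ℂ[X]° where I is the augmentation ideal of (ℂ[X])*. Consequently J² ⊊ I² ∩ ℂ[X]°. -/
open Polynomial PowerSeries Finset

noncomputable section

/-- The full linear dual of the polynomial algebra `ℂ[X]`. -/
abbrev DualP : Type := Module.Dual ℂ (Polynomial ℂ)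

/-- The linear isomorphism `Φ : ℂ^ℕ → (ℂ[X])*`, `Φ z (X^m) = z m`. -/
noncomputable def Phi : (ℕ → ℂ) ≃ₗ[ℂ] DualP :=
  (Polynomial.basisMonomials ℂ).constr ℂ

lemma Phi_apply (z : ℕ → ℂ) (m : ℕ) : Phi z ((X : Polynomial ℂ) ^ m) = z m := by
  have h : ((X : Polynomial ℂ) ^ m) = Polynomial.basisMonomials ℂ m := by
    simp [coe_basisMonomials, X_pow_eq_monomial]
  rw [h, Phi, Module.Basis.constr_basis]

/-- The underlying bijection of `Θ : (ℂ[X])* → ℂ[[Z]]`, `f ↦ ∑ₖ f(Xᵏ/k!) Zᵏ`. -/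
noncomputable def eTheta : DualP ≃ PowerSeries ℂ where
  toFun f := PowerSeries.mk fun k => f ((X : Polynomial ℂ) ^ k) / (k.factorial : ℂ)
  invFun φ := Phi fun n => (n.factorial : ℂ) * PowerSeries.coeff n φ
  left_inv f := by
    refine (Polynomial.basisMonomials ℂ).ext fun n => ?_
    have h : Polynomial.basisMonomials ℂ n = ((X : Polynomial ℂ) ^ n) := by
      simp [coe_basisMonomials, X_pow_eq_monomial]
    rw [h, Phi_apply]
    have hn : ((n.factorial : ℂ)) ≠ 0 := by
      exact_mod_cast Nat.factorial_ne_zero n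
    rw [PowerSeries.coeff_mk]
    field_simp
  right_inv φ := by
    ext n
    rw [PowerSeries.coeff_mk, Phi_apply]
    have hn : ((n.factorial : ℂ)) ≠ 0 := by
      exact_mod_cast Nat.factorial_ne_zero n
    field_simp

lemma eTheta_apply (f : DualP) :
    eTheta f = PowerSeries.mk fun k => f ((X : Polynomial ℂ) ^ k) / (k.factorial : ℂ) := rfl

lemma eTheta_symm_apply_pow (φ : PowerSeries ℂ) (n : ℕ) :
    eTheta.symm φ ((X : Polynomial ℂ) ^ n) = (n.factorial : ℂ) * PowerSeries.coeff n φ :=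
  Phi_apply _ n

lemma eTheta_add (f g : DualP) : eTheta (f + g) = eTheta f + eTheta g := by
  ext n
  simp [eTheta_apply, add_div]

lemma eTheta_smul (c : ℂ) (f : DualP) : eTheta (c • f) = c • eTheta f := by
  ext n
  simp [eTheta_apply, mul_div_assoc]

lemma eTheta_symm_add (x y : PowerSeries ℂ) :
    eTheta.symm (x + y) = eTheta.symm x + eTheta.symm y := by
  apply eTheta.injective
  rw [eTheta_add, eTheta.apply_symm_apply, eTheta.apply_symm_apply, eTheta.apply_symm_apply]

lemma eTheta_symm_smul (c : ℂ) (x : PowerSeries ℂ) :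
    eTheta.symm (c • x) = c • eTheta.symm x := by
  apply eTheta.injective
  rw [eTheta_smul, eTheta.apply_symm_apply, eTheta.apply_symm_apply]

/-- The convolution (Hurwitz) ring structure on `(ℂ[X])*`, transported through `Θ`.
By `mul_apply_pow` below, the product is precisely the convolution product
`(f*g)(Xⁿ) = ∑ₖ (n choose k) f(Xᵏ) g(Xⁿ⁻ᵏ)`. -/
noncomputable instance : CommRing DualP :=
  { (inferInstance : AddCommGroup DualP) with
    mul := fun f g => eTheta.symm (eTheta f * eTheta g)
    one := eTheta.symm 1
    mul_assoc := fun a b c => by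
      show eTheta.symm (eTheta (eTheta.symm _) * _) = eTheta.symm (_ * eTheta (eTheta.symm _))
      rw [eTheta.apply_symm_apply, eTheta.apply_symm_apply, mul_assoc]
    one_mul := fun a => by
      show eTheta.symm (eTheta (eTheta.symm 1) * eTheta a) = a
      rw [eTheta.apply_symm_apply, one_mul, eTheta.symm_apply_apply]
    mul_one := fun a => by
      show eTheta.symm (eTheta a * eTheta (eTheta.symm 1)) = a
      rw [eTheta.apply_symm_apply, mul_one, eTheta.symm_apply_apply]
    left_distrib := fun a b c => by
      show eTheta.symm (eTheta a * eTheta (b + c)) = eTheta.symm _ + eTheta.symm _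
      rw [eTheta_add, mul_add, eTheta_symm_add]
    right_distrib := fun a b c => by
      show eTheta.symm (eTheta (a + b) * eTheta c) = eTheta.symm _ + eTheta.symm _
      rw [eTheta_add, add_mul, eTheta_symm_add]
    zero_mul := fun a => by
      show eTheta.symm (eTheta 0 * eTheta a) = 0
      have h0 : eTheta (0 : DualP) = 0 := by
        ext n; simp [eTheta_apply]
      rw [h0, zero_mul, ← h0, eTheta.symm_apply_apply]
    mul_zero := fun a => by
      show eTheta.symm (eTheta a * eTheta 0) = 0
      have h0 : eTheta (0 : DualP) = 0 := by
        ext n; simp [eTheta_apply]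
      rw [h0, mul_zero, ← h0, eTheta.symm_apply_apply]
    mul_comm := fun a b => by
      show eTheta.symm (eTheta a * eTheta b) = eTheta.symm (eTheta b * eTheta a)
      rw [mul_comm] }

lemma mul_def (f g : DualP) : f * g = eTheta.symm (eTheta f * eTheta g) := rfl

noncomputable instance : Algebra ℂ DualP :=
  Algebra.ofModule
    (fun c f g => by
      rw [mul_def, mul_def, eTheta_smul, smul_mul_assoc, eTheta_symm_smul])
    (fun c f g => by
      rw [mul_def, mul_def, eTheta_smul, mul_smul_comm, eTheta_symm_smul])

/-- The product on `(ℂ[X])*` is the convolution product. -/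
lemma mul_apply_pow (f g : DualP) (n : ℕ) :
    (f * g) ((X : Polynomial ℂ) ^ n)
      = ∑ k ∈ Finset.range (n + 1),
          (n.choose k : ℂ) * f ((X : Polynomial ℂ) ^ k) * g ((X : Polynomial ℂ) ^ (n - k)) := by
  rw [mul_def, eTheta_symm_apply_pow, PowerSeries.coeff_mul,
    Finset.Nat.sum_antidiagonal_eq_sum_range_succ_mk, Finset.mul_sum]
  refine Finset.sum_congr rfl fun k hk => ?_
  have hk' : k ≤ n := Nat.lt_succ_iff.mp (Finset.mem_range.mp hk)
  rw [eTheta_apply, eTheta_apply, PowerSeries.coeff_mk, PowerSeries.coeff_mk,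
    Nat.cast_choose ℂ hk']
  have h1 : ((k.factorial : ℂ)) ≠ 0 := by exact_mod_cast Nat.factorial_ne_zero k
  have h2 : (((n - k).factorial : ℂ)) ≠ 0 := by exact_mod_cast Nat.factorial_ne_zero (n - k)
  field_simp

lemma one_apply_pow (n : ℕ) :
    (1 : DualP) ((X : Polynomial ℂ) ^ n) = if n = 0 then 1 else 0 := by
  show eTheta.symm 1 _ = _
  rw [eTheta_symm_apply_pow, PowerSeries.coeff_one]
  split <;> simp_all [Nat.factorial]

lemma mul_apply_one (f g : DualP) : (f * g) (1 : Polynomial ℂ) = f 1 * g 1 := by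
  have := mul_apply_pow f g 0
  simpa using this

/-- The augmentation ideal `I = ker ε₊` of `(ℂ[X])*`, where `ε₊(f) = f(1)`. -/
noncomputable def Iaug : Ideal DualP where
  carrier := {f | f (1 : Polynomial ℂ) = 0}
  add_mem' := by
    intro a b ha hb
    simp only [Set.mem_setOf_eq] at *
    simp [ha, hb]
  zero_mem' := by simp
  smul_mem' := by
    intro c f hf
    simp only [Set.mem_setOf_eq] at *
    rw [smul_eq_mul, mul_apply_one, hf, mul_zero]

lemma mem_Iaug_iff (f : DualP) : f ∈ Iaug ↔ f (1 : Polynomial ℂ) = 0 := Iff.rfl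

/-- `ξ ∈ (ℂ[X])*`, `ξ(Xⁿ) = δ_{n,1}`. -/
noncomputable def xiD : DualP := Phi fun n => if n = 1 then 1 else 0

/-- `φ_λ : ℂ[X] → ℂ`, the algebra map with `φ_λ(X) = λ`, i.e. evaluation at `λ`. -/
noncomputable def phiL (l : ℂ) : DualP := (Polynomial.aeval l).toLinearMap

lemma phiL_apply (l : ℂ) (p : Polynomial ℂ) : phiL l p = Polynomial.aeval l p := rfl

/-- Membership in the finite (Sweedler) dual `ℂ[X]°`: vanishing on a non-zero ideal. -/
def IsFinDual (f : DualP) : Prop :=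
  ∃ I : Ideal (Polynomial ℂ), I ≠ ⊥ ∧ ∀ p ∈ I, f p = 0

/-- The `n`-th power `Jⁿ` of the augmentation ideal `J` of the finite dual `ℂ[X]°`,
described as a set: the additive closure of products of `n` elements of `J`. -/
noncomputable def JpowSet (n : ℕ) : AddSubmonoid DualP :=
  AddSubmonoid.closure
    {y | ∃ g : Fin n → DualP,
      (∀ i, IsFinDual (g i) ∧ g i (1 : Polynomial ℂ) = 0) ∧ y = ∏ i, g i}

end
noncomputable section AuxJ

instance : SMulCommClass ℂ DualP DualP := Algebra.to_smulCommClass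

instance : IsScalarTower ℂ DualP DualP := IsScalarTower.right

/-- Extensionality for functionals via monomials. -/
lemma dualExt {f g : DualP} (h : ∀ n, f ((X : Polynomial ℂ) ^ n) = g ((X : Polynomial ℂ) ^ n)) :
    f = g := by
  refine (Polynomial.basisMonomials ℂ).ext fun n => ?_
  have hb : Polynomial.basisMonomials ℂ n = ((X : Polynomial ℂ) ^ n) := by
    simp [coe_basisMonomials, X_pow_eq_monomial]
  rw [hb]; exact h n

/-- The basic quasipolynomial sequences `n ↦ C(n,j) μ^(n-j)`. -/
def eSeq (μ : ℂ) (j : ℕ) : ℕ → ℂ := fun n => (n.choose j : ℂ) * μ ^ (n - j)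

/-- The corresponding functionals on `ℂ[X]`. -/
def Efun (μ : ℂ) (j : ℕ) : DualP := Phi (eSeq μ j)

lemma Efun_pow (μ : ℂ) (j n : ℕ) : Efun μ j ((X : Polynomial ℂ) ^ n) = eSeq μ j n :=
  Phi_apply _ n

lemma eSeq_zero (μ : ℂ) (j : ℕ) : eSeq μ j 0 = if j = 0 then 1 else 0 := by
  rcases j with _ | j
  · simp [eSeq]
  · simp [eSeq, Nat.choose_eq_zero_of_lt (Nat.succ_pos j)]

lemma Efun_apply_one (μ : ℂ) (j : ℕ) :
    Efun μ j (1 : Polynomial ℂ) = if j = 0 then 1 else 0 := by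
  rw [show (1 : Polynomial ℂ) = (X : Polynomial ℂ) ^ 0 from (pow_zero _).symm, Efun_pow,
    eSeq_zero]

lemma eSeq_succ_zero (μ : ℂ) (n : ℕ) : eSeq μ 0 (n + 1) = μ * eSeq μ 0 n := by
  simp only [eSeq, Nat.choose_zero_right, Nat.cast_one, one_mul, Nat.sub_zero, pow_succ]
  ring

lemma eSeq_succ_succ (μ : ℂ) (j n : ℕ) :
    eSeq μ (j + 1) (n + 1) = μ * eSeq μ (j + 1) n + eSeq μ j n := by
  unfold eSeq
  rcases le_or_gt (j + 1) n with h | h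
  · rw [Nat.succ_sub_succ, Nat.choose_succ_succ, show n - j = (n - (j + 1)) + 1 by omega,
      pow_succ]
    push_cast
    ring
  · rw [Nat.succ_sub_succ, Nat.choose_succ_succ, Nat.choose_eq_zero_of_lt h]
    push_cast
    ring

lemma Efun_taylor (μ : ℂ) (j : ℕ) (p : Polynomial ℂ) :
    Efun μ j p = (p.comp ((X : Polynomial ℂ) + Polynomial.C μ)).coeff j := by
  induction p using Polynomial.induction_on' with
  | add p q hp hq => rw [map_add, hp, hq, add_comp, coeff_add]
  | monomial n a =>
    rw [← C_mul_X_pow_eq_monomial, ← Polynomial.smul_eq_C_mul, map_smul, smul_comp, X_pow_comp,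
      Polynomial.coeff_smul, Efun_pow]
    simp only [smul_eq_mul, coeff_X_add_C_pow, eSeq]
    ring

lemma Efun_vanish {μ : ℂ} {j : ℕ} {p : Polynomial ℂ}
    (h : ((X : Polynomial ℂ) - Polynomial.C μ) ^ (j + 1) ∣ p) : Efun μ j p = 0 := by
  obtain ⟨r, rfl⟩ := h
  rw [Efun_taylor, mul_comp, pow_comp, sub_comp, X_comp, C_comp, add_sub_cancel_right,
    pow_succ, mul_assoc]
  have h2 := Polynomial.coeff_X_pow_mul
    ((X : Polynomial ℂ) * r.comp ((X : Polynomial ℂ) + Polynomial.C μ)) j 0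
  rw [zero_add] at h2
  rw [h2, mul_coeff_zero, coeff_X_zero, zero_mul]

lemma eTheta_Efun (μ : ℂ) (j : ℕ) :
    eTheta (Efun μ j) = ((j.factorial : ℂ))⁻¹ •
      ((PowerSeries.X : PowerSeries ℂ) ^ j * PowerSeries.rescale μ (PowerSeries.exp ℂ)) := by
  ext k
  rw [eTheta_apply, PowerSeries.coeff_mk, Efun_pow, map_smul, smul_eq_mul,
    PowerSeries.coeff_X_pow_mul']
  rcases le_or_gt j k with h | h
  · rw [if_pos h, PowerSeries.coeff_rescale, PowerSeries.coeff_exp]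
    have h1 : ((j.factorial : ℂ)) ≠ 0 := by exact_mod_cast Nat.factorial_ne_zero j
    have h2 : (((k - j).factorial : ℂ)) ≠ 0 := by exact_mod_cast Nat.factorial_ne_zero (k - j)
    have h3 : ((k.factorial : ℂ)) ≠ 0 := by exact_mod_cast Nat.factorial_ne_zero k
    rw [eSeq, Nat.cast_choose ℂ h]
    simp only [map_div₀, map_one, map_natCast]
    field_simp
  · rw [if_neg (not_le.mpr h), eSeq, Nat.choose_eq_zero_of_lt h]
    simp

lemma Efun_mul (μ ν : ℂ) (i j : ℕ) :
    Efun μ i * Efun ν j = (((i + j).choose i : ℕ) : ℂ) • Efun (μ + ν) (i + j) := by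
  rw [mul_def, Equiv.symm_apply_eq, eTheta_smul, eTheta_Efun, eTheta_Efun, eTheta_Efun,
    smul_mul_assoc, mul_smul_comm, smul_smul, smul_smul]
  have hX : ((PowerSeries.X : PowerSeries ℂ) ^ i * PowerSeries.rescale μ (PowerSeries.exp ℂ)) *
      ((PowerSeries.X : PowerSeries ℂ) ^ j * PowerSeries.rescale ν (PowerSeries.exp ℂ))
      = (PowerSeries.X : PowerSeries ℂ) ^ (i + j) *
        (PowerSeries.rescale μ (PowerSeries.exp ℂ) * PowerSeries.rescale ν (PowerSeries.exp ℂ)) := by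
    ring
  rw [hX, PowerSeries.exp_mul_exp_eq_exp_add]
  congr 1
  have h1 : ((i.factorial : ℂ)) ≠ 0 := by exact_mod_cast Nat.factorial_ne_zero i
  have h2 : ((j.factorial : ℂ)) ≠ 0 := by exact_mod_cast Nat.factorial_ne_zero j
  have h3 : (((i + j).factorial : ℂ)) ≠ 0 := by exact_mod_cast Nat.factorial_ne_zero (i + j)
  rw [Nat.cast_choose ℂ (Nat.le_add_right i j), add_tsub_cancel_left]
  field_simp

/-- Realization of a finite formal combination of the `Efun`s. -/
def RepF : ((ℂ × ℕ) →₀ ℂ) →ₗ[ℂ] DualP :=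
  Finsupp.linearCombination ℂ (fun p : ℂ × ℕ => Efun p.1 p.2)

/-- The separating functional: `single (μ,0) 1 ↦ μ`, `single (μ,j+1) 1 ↦ 0`. -/
def Lfun : ((ℂ × ℕ) →₀ ℂ) →ₗ[ℂ] ℂ :=
  Finsupp.linearCombination ℂ (fun p : ℂ × ℕ => if p.2 = 0 then p.1 else 0)

lemma RepF_single (p : ℂ × ℕ) (a : ℂ) : RepF (Finsupp.single p a) = a • Efun p.1 p.2 := by
  rw [RepF, Finsupp.linearCombination_single]

lemma Lfun_single (p : ℂ × ℕ) (a : ℂ) :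
    Lfun (Finsupp.single p a) = a * (if p.2 = 0 then p.1 else 0) := by
  rw [Lfun, Finsupp.linearCombination_single, smul_eq_mul]

lemma RepF_apply (c : (ℂ × ℕ) →₀ ℂ) (r : Polynomial ℂ) :
    RepF c r = ∑ p ∈ c.support, c p * Efun p.1 p.2 r := by
  rw [RepF, Finsupp.linearCombination_apply, Finsupp.sum]
  rw [LinearMap.coe_sum, Finset.sum_apply]
  exact Finset.sum_congr rfl fun p _ => by rw [LinearMap.smul_apply, smul_eq_mul]

lemma RepF_inj {c : (ℂ × ℕ) →₀ ℂ} (h : RepF c = 0) : c = 0 := by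
  set B := (c.support.sup fun p : ℂ × ℕ => p.2) + 1 with hBdef
  have hsup : ∀ p ∈ c.support, p.2 < B := fun p hp =>
    Nat.lt_succ_of_le (Finset.le_sup (f := fun p : ℂ × ℕ => p.2) hp)
  set F := c.support.image Prod.fst with hFdef
  have key : ∀ (m : ℕ) (μ0 : ℂ) (j : ℕ), B ≤ j + m → c (μ0, j) = 0 := by
    intro m
    induction m with
    | zero =>
      intro μ0 j hj
      by_contra hc
      have := hsup (μ0, j) (Finsupp.mem_support_iff.mpr hc)
      omega
    | succ m ih =>
      intro μ0 j hj
      by_cases hcase : B ≤ j + m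
      · exact ih μ0 j hcase
      by_cases hmem : (μ0, j) ∈ c.support
      swap
      · exact Finsupp.notMem_support_iff.mp hmem
      set q : Polynomial ℂ :=
        ((X : Polynomial ℂ) - Polynomial.C μ0) ^ j * ∏ ν ∈ F.erase μ0, ((X : Polynomial ℂ) - Polynomial.C ν) ^ B
        with hqdef
      have h0 : RepF c q = 0 := by rw [h]; rfl
      rw [RepF_apply] at h0
      have hsing : ∀ p ∈ c.support, p ≠ (μ0, j) → c p * Efun p.1 p.2 q = 0 := by
        intro p hp hne
        by_cases hfst : p.1 = μ0
        · rcases lt_trichotomy p.2 j with hlt | heq | hgt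
          · have hd : ((X : Polynomial ℂ) - Polynomial.C p.1) ^ (p.2 + 1) ∣ q := by
              rw [hfst]
              exact dvd_mul_of_dvd_left (pow_dvd_pow _ hlt) _
            rw [Efun_vanish hd, mul_zero]
          · exact absurd (Prod.ext hfst heq) hne
          · have hcp : c p = 0 := by
              have h' := ih p.1 p.2 (by omega)
              simpa using h'
            rw [hcp, zero_mul]
        · have hmemF : p.1 ∈ F.erase μ0 :=
            Finset.mem_erase.mpr ⟨hfst, Finset.mem_image_of_mem _ hp⟩
          have h1 : ((X : Polynomial ℂ) - Polynomial.C p.1) ^ (p.2 + 1) ∣ ((X : Polynomial ℂ) - Polynomial.C p.1) ^ B :=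
            pow_dvd_pow _ (hsup p hp)
          have hd : ((X : Polynomial ℂ) - Polynomial.C p.1) ^ (p.2 + 1) ∣ q :=
            Dvd.dvd.mul_left (h1.trans (Finset.dvd_prod_of_mem (fun ν => ((X : Polynomial ℂ) - Polynomial.C ν) ^ B) hmemF)) _
          rw [Efun_vanish hd, mul_zero]
      rw [Finset.sum_eq_single (μ0, j) hsing (fun hn => absurd hmem hn)] at h0
      have hval : Efun μ0 j q = ∏ ν ∈ F.erase μ0, (μ0 - ν) ^ B := by
        rw [Efun_taylor, hqdef, mul_comp, pow_comp, sub_comp, X_comp, C_comp,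
          add_sub_cancel_right, Polynomial.prod_comp]
        have hcomp : ∀ ν ∈ F.erase μ0,
            ((((X : Polynomial ℂ) - Polynomial.C ν) ^ B).comp ((X : Polynomial ℂ) + Polynomial.C μ0))
              = ((X : Polynomial ℂ) + Polynomial.C (μ0 - ν)) ^ B := by
          intro ν _
          rw [pow_comp, sub_comp, X_comp, C_comp, C_sub, add_sub_assoc]
        rw [Finset.prod_congr rfl hcomp]
        have h2 := Polynomial.coeff_X_pow_mul
          (∏ ν ∈ F.erase μ0, ((X : Polynomial ℂ) + Polynomial.C (μ0 - ν)) ^ B) j 0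
        rw [zero_add] at h2
        rw [h2, coeff_zero_eq_eval_zero]
        simp [eval_prod]
      have hne0 : (∏ ν ∈ F.erase μ0, (μ0 - ν) ^ B) ≠ 0 := by
        rw [Finset.prod_ne_zero_iff]
        intro ν hν
        exact pow_ne_zero _ (sub_ne_zero.mpr (Ne.symm (Finset.mem_erase.mp hν).1))
      rw [hval] at h0
      exact (mul_eq_zero.mp h0).resolve_right hne0
  ext p
  have := key B p.1 p.2 (by omega)
  simpa using this
lemma solveOne (z μ : ℂ) (j : ℕ) :
    ∃ e : (ℂ × ℕ) →₀ ℂ, ∀ n : ℕ,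
      RepF e ((X : Polynomial ℂ) ^ (n + 1)) - z * RepF e ((X : Polynomial ℂ) ^ n)
        = eSeq μ j n := by
  by_cases hz : μ = z
  · subst hz
    refine ⟨Finsupp.single (μ, j + 1) 1, fun n => ?_⟩
    rw [RepF_single, one_smul, Efun_pow, Efun_pow, eSeq_succ_succ]
    ring
  · have hne : μ - z ≠ 0 := sub_ne_zero.mpr hz
    induction j with
    | zero =>
      refine ⟨Finsupp.single (μ, 0) (μ - z)⁻¹, fun n => ?_⟩
      rw [RepF_single, LinearMap.smul_apply, LinearMap.smul_apply, Efun_pow, Efun_pow,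
        eSeq_succ_zero, smul_eq_mul, smul_eq_mul]
      field_simp
    | succ j ihj =>
      obtain ⟨e0, he0⟩ := ihj
      refine ⟨(μ - z)⁻¹ • (Finsupp.single (μ, j + 1) 1 - e0), fun n => ?_⟩
      rw [map_smul, map_sub, RepF_single, one_smul]
      simp only [LinearMap.smul_apply, LinearMap.sub_apply, smul_eq_mul, Efun_pow]
      have h1 := he0 n
      rw [eSeq_succ_succ]
      field_simp
      linear_combination -h1
lemma solveShift (z : ℂ) (d0 : (ℂ × ℕ) →₀ ℂ) :
    ∃ d1 : (ℂ × ℕ) →₀ ℂ, ∀ n : ℕ,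
      RepF d1 ((X : Polynomial ℂ) ^ (n + 1)) - z * RepF d1 ((X : Polynomial ℂ) ^ n)
        = RepF d0 ((X : Polynomial ℂ) ^ n) := by
  induction d0 using Finsupp.induction with
  | zero => exact ⟨0, fun n => by simp⟩
  | single_add p b s hps hb ih =>
    obtain ⟨ds, hds⟩ := ih
    obtain ⟨e, he⟩ := solveOne z p.1 p.2
    refine ⟨b • e + ds, fun n => ?_⟩
    rw [map_add, map_smul, map_add, RepF_single]
    simp only [LinearMap.add_apply, LinearMap.smul_apply, smul_eq_mul, Efun_pow]
    linear_combination b * he n + hds n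

lemma finDual_degZero (cp : Polynomial ℂ) (hc : cp ≠ 0) (h0 : cp.natDegree = 0)
    (f : DualP) (hf : ∀ q, f (cp * q) = 0) : f = RepF 0 := by
  obtain ⟨a, ha⟩ := Polynomial.natDegree_eq_zero.mp h0
  have ha0 : a ≠ 0 := by
    rintro rfl
    rw [map_zero] at ha
    exact hc ha.symm
  rw [map_zero]
  apply LinearMap.ext; intro r
  have hfr := hf (Polynomial.C a⁻¹ * r)
  rw [← ha, ← mul_assoc, ← C_mul, mul_inv_cancel₀ ha0, C_1, one_mul] at hfr
  simpa using hfr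

lemma finDualRep_aux : ∀ (N : ℕ) (cp : Polynomial ℂ), cp ≠ 0 → cp.natDegree ≤ N →
    ∀ f : DualP, (∀ q, f (cp * q) = 0) → ∃ d, f = RepF d := by
  intro N
  induction N with
  | zero =>
    intro cp hc hdeg f hf
    exact ⟨0, finDual_degZero cp hc (Nat.le_zero.mp hdeg) f hf⟩
  | succ N ihN =>
    intro cp hc hdeg f hf
    by_cases h0 : cp.natDegree = 0
    · exact ⟨0, finDual_degZero cp hc h0 f hf⟩
    have hdegpos : 0 < cp.natDegree := Nat.pos_of_ne_zero h0
    obtain ⟨z, hz⟩ := Complex.exists_root (Polynomial.natDegree_pos_iff_degree_pos.mp hdegpos)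
    obtain ⟨c1, hc1⟩ := Polynomial.dvd_iff_isRoot.mpr hz
    have hc1ne : c1 ≠ 0 := by
      rintro rfl
      rw [mul_zero] at hc1
      exact hc hc1
    have hdeg1 : c1.natDegree ≤ N := by
      rw [hc1, Polynomial.natDegree_mul (Polynomial.X_sub_C_ne_zero z) hc1ne,
        natDegree_X_sub_C] at hdeg
      omega
    set g : DualP := f.comp (LinearMap.mulLeft ℂ ((X : Polynomial ℂ) - Polynomial.C z)) with hgdef
    have hgval : ∀ q, g q = f (((X : Polynomial ℂ) - Polynomial.C z) * q) := fun q => rfl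
    have hgvan : ∀ q, g (c1 * q) = 0 := by
      intro q
      rw [hgval, ← mul_assoc, ← hc1]
      exact hf q
    obtain ⟨d0, hd0⟩ := ihN c1 hc1ne hdeg1 g hgvan
    obtain ⟨d1, hd1⟩ := solveShift z d0
    set h2 : DualP := f - RepF d1 with hh2
    have hrec : ∀ n, h2 ((X : Polynomial ℂ) ^ (n + 1)) = z * h2 ((X : Polynomial ℂ) ^ n) := by
      intro n
      have e1 : g ((X : Polynomial ℂ) ^ n)
          = f ((X : Polynomial ℂ) ^ (n + 1)) - z * f ((X : Polynomial ℂ) ^ n) := by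
        rw [hgval]
        have hxp : ((X : Polynomial ℂ) - Polynomial.C z) * (X : Polynomial ℂ) ^ n
            = (X : Polynomial ℂ) ^ (n + 1) - z • (X : Polynomial ℂ) ^ n := by
          rw [Polynomial.smul_eq_C_mul]
          ring
        rw [hxp, map_sub, map_smul, smul_eq_mul]
      have e1' : RepF d0 ((X : Polynomial ℂ) ^ n)
          = f ((X : Polynomial ℂ) ^ (n + 1)) - z * f ((X : Polynomial ℂ) ^ n) := by
        rw [← hd0]; exact e1
      have e2 := hd1 n
      simp only [hh2, LinearMap.sub_apply]
      linear_combination -e1' - e2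
    have hgeo : ∀ n, h2 ((X : Polynomial ℂ) ^ n) = h2 (1 : Polynomial ℂ) * z ^ n := by
      intro n
      induction n with
      | zero => simp
      | succ n ihn => rw [hrec n, ihn, pow_succ]; ring
    refine ⟨d1 + Finsupp.single (z, 0) (h2 (1 : Polynomial ℂ)), ?_⟩
    apply dualExt; intro n
    rw [map_add, RepF_single]
    simp only [LinearMap.add_apply, LinearMap.smul_apply, smul_eq_mul, Efun_pow]
    have hz0 : eSeq z 0 n = z ^ n := by simp [eSeq]
    rw [hz0]
    simp only [hh2, LinearMap.sub_apply]
    have hgn := hgeo n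
    simp only [hh2, LinearMap.sub_apply] at hgn
    linear_combination hgn

lemma finDual_rep {f : DualP} (hf : IsFinDual f) : ∃ d, f = RepF d := by
  obtain ⟨I, hI, hvan⟩ := hf
  obtain ⟨cp, hcI, hcne⟩ := (Submodule.ne_bot_iff I).mp hI
  exact finDualRep_aux cp.natDegree cp hcne le_rfl f
    (fun q => hvan _ (Ideal.mul_mem_right q I hcI))

lemma RepF_isFinDual (c : (ℂ × ℕ) →₀ ℂ) : IsFinDual (RepF c) := by
  refine ⟨Ideal.span {∏ p ∈ c.support, ((X : Polynomial ℂ) - Polynomial.C p.1) ^ (p.2 + 1)}, ?_, ?_⟩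
  · rw [Ne, Ideal.span_singleton_eq_bot]
    exact Finset.prod_ne_zero_iff.mpr
      (fun p _ => pow_ne_zero _ (Polynomial.X_sub_C_ne_zero p.1))
  · intro r hr
    obtain ⟨d, hd⟩ := Ideal.mem_span_singleton.mp hr
    rw [RepF_apply]
    refine Finset.sum_eq_zero fun p hp => ?_
    have hdvd : ((X : Polynomial ℂ) - Polynomial.C p.1) ^ (p.2 + 1) ∣ r :=
      (Finset.dvd_prod_of_mem (fun p : ℂ × ℕ => ((X : Polynomial ℂ) - Polynomial.C p.1) ^ (p.2 + 1)) hp).trans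
        ⟨d, hd⟩
    rw [Efun_vanish hdvd, mul_zero]
lemma Efun_one_zero : Efun 1 0 = phiL 1 := by
  apply dualExt; intro n
  rw [Efun_pow, phiL_apply, map_pow, Polynomial.aeval_X, one_pow]
  simp [eSeq]

lemma Efun_zero_zero : Efun 0 0 = 1 := by
  apply dualExt; intro n
  rw [Efun_pow, one_apply_pow]
  simp [eSeq, zero_pow_eq]

lemma Efun_zero_one : Efun 0 1 = xiD := by
  apply dualExt; intro n
  rw [Efun_pow, xiD, Phi_apply]
  rcases n with _ | n
  · simp [eSeq]
  · rcases n with _ | n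
    · simp [eSeq]
    · simp [eSeq, Nat.succ_ne_zero]

lemma Efun_mul_rep (p : ℂ × ℕ) (c1 : (ℂ × ℕ) →₀ ℂ) :
    ∃ c : (ℂ × ℕ) →₀ ℂ, Efun p.1 p.2 * RepF c1 = RepF c ∧
      Lfun c = (if p.2 = 0 then (1 : ℂ) else 0) * Lfun c1
        + (if p.2 = 0 then p.1 else 0) * RepF c1 (1 : Polynomial ℂ) := by
  induction c1 using Finsupp.induction with
  | zero => exact ⟨0, by simp, by simp⟩
  | single_add q b s hqs hb ih =>
    obtain ⟨c', hc', hl'⟩ := ih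
    refine ⟨Finsupp.single (p.1 + q.1, p.2 + q.2) (b * (((p.2 + q.2).choose p.2 : ℕ) : ℂ)) + c',
      ?_, ?_⟩
    · rw [map_add, map_add, RepF_single, RepF_single, mul_add, hc']
      congr 1
      rw [mul_smul_comm, Efun_mul, smul_smul]
    · have hRs1 : RepF (Finsupp.single q b + s) (1 : Polynomial ℂ)
          = b * (if q.2 = 0 then 1 else 0) + RepF s (1 : Polynomial ℂ) := by
        rw [map_add, LinearMap.add_apply, RepF_single, LinearMap.smul_apply, Efun_apply_one,
          smul_eq_mul]
      have hLs : Lfun (Finsupp.single q b + s)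
          = b * (if q.2 = 0 then q.1 else 0) + Lfun s := by
        rw [map_add, Lfun_single]
      rw [map_add, Lfun_single, hl', hRs1, hLs]
      by_cases hp2 : p.2 = 0 <;> by_cases hq2 : q.2 = 0 <;>
        simp [hp2, hq2] <;> ring

lemma RepF_mul (c0 c1 : (ℂ × ℕ) →₀ ℂ) :
    ∃ c : (ℂ × ℕ) →₀ ℂ, RepF c0 * RepF c1 = RepF c ∧
      Lfun c = RepF c0 (1 : Polynomial ℂ) * Lfun c1
        + Lfun c0 * RepF c1 (1 : Polynomial ℂ) := by
  induction c0 using Finsupp.induction with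
  | zero => exact ⟨0, by simp, by simp⟩
  | single_add p a s hps ha0 ih =>
    obtain ⟨cs, hcs, hls⟩ := ih
    obtain ⟨cp, hcp, hlp⟩ := Efun_mul_rep p c1
    refine ⟨a • cp + cs, ?_, ?_⟩
    · rw [map_add, map_add, map_smul, RepF_single, add_mul, smul_mul_assoc, hcp, hcs]
    · have h1 : RepF (Finsupp.single p a + s) (1 : Polynomial ℂ)
          = a * (if p.2 = 0 then 1 else 0) + RepF s (1 : Polynomial ℂ) := by
        rw [map_add, LinearMap.add_apply, RepF_single, LinearMap.smul_apply, Efun_apply_one,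
          smul_eq_mul]
      have h2 : Lfun (Finsupp.single p a + s)
          = a * (if p.2 = 0 then p.1 else 0) + Lfun s := by
        rw [map_add, Lfun_single]
      rw [map_add, map_smul, smul_eq_mul, hlp, hls, h1, h2]
      ring

/-- Coefficients realizing `φ₁ - ε - ξ`. -/
def cstar : (ℂ × ℕ) →₀ ℂ :=
  Finsupp.single (1, 0) 1 - Finsupp.single (0, 0) 1 - Finsupp.single (0, 1) 1

/-- Coefficients realizing `φ₁ - ε`. -/
def cstar2 : (ℂ × ℕ) →₀ ℂ :=
  Finsupp.single (1, 0) 1 - Finsupp.single (0, 0) 1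

lemma RepF_cstar : RepF cstar = phiL 1 - 1 - xiD := by
  rw [cstar, map_sub, map_sub, RepF_single, RepF_single, RepF_single, one_smul, one_smul,
    one_smul, Efun_one_zero, Efun_zero_zero, Efun_zero_one]

lemma RepF_cstar2 : RepF cstar2 = phiL 1 - 1 := by
  rw [cstar2, map_sub, RepF_single, RepF_single, one_smul, one_smul,
    Efun_one_zero, Efun_zero_zero]

lemma Lfun_cstar : Lfun cstar = 1 := by
  rw [cstar, map_sub, map_sub, Lfun_single, Lfun_single, Lfun_single]
  norm_num

lemma Lfun_cstar2 : Lfun cstar2 = 1 := by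
  rw [cstar2, map_sub, Lfun_single, Lfun_single]
  norm_num
/-- The power series `(e^Z - 1 - Z)/Z`. -/
def Wser : PowerSeries ℂ :=
  PowerSeries.mk fun j => if j = 0 then 0 else (((j + 1).factorial : ℂ))⁻¹

/-- The functional with `Θ w = Wser`. -/
def wD : DualP := eTheta.symm Wser

lemma eTheta_xiD : eTheta xiD = (PowerSeries.X : PowerSeries ℂ) := by
  ext k
  rw [eTheta_apply, PowerSeries.coeff_mk, xiD, Phi_apply, PowerSeries.coeff_X]
  rcases k with _ | k
  · norm_num
  · rcases k with _ | k <;> simp [Nat.factorial]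

lemma xiD_mul_wD : xiD * wD = phiL 1 - 1 - xiD := by
  have hW : eTheta (phiL 1 - 1 - xiD) = (PowerSeries.X : PowerSeries ℂ) * Wser := by
    ext k
    rw [eTheta_apply, PowerSeries.coeff_mk]
    have happ : (phiL 1 - 1 - xiD) ((X : Polynomial ℂ) ^ k)
        = 1 - (if k = 0 then 1 else 0) - (if k = 1 then 1 else 0) := by
      rw [LinearMap.sub_apply, LinearMap.sub_apply, one_apply_pow, phiL_apply, map_pow,
        Polynomial.aeval_X, one_pow, xiD, Phi_apply]
    rw [happ]
    rcases k with _ | k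
    · rw [PowerSeries.coeff_zero_X_mul]
      norm_num
    · rw [PowerSeries.coeff_succ_X_mul, Wser, PowerSeries.coeff_mk]
      rcases k with _ | k
      · norm_num [Nat.factorial]
      · have hne : ((k + 1 + 1).factorial : ℂ) ≠ 0 := by
          exact_mod_cast Nat.factorial_ne_zero _
        simp [Nat.succ_ne_zero, div_eq_mul_inv]
  rw [mul_def, eTheta_xiD, wD, eTheta.apply_symm_apply, ← hW, eTheta.symm_apply_apply]

lemma xiD_one : xiD (1 : Polynomial ℂ) = 0 := by
  rw [show (1 : Polynomial ℂ) = (X : Polynomial ℂ) ^ 0 from (pow_zero _).symm, xiD, Phi_apply]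
  norm_num

lemma wD_one : wD (1 : Polynomial ℂ) = 0 := by
  rw [show (1 : Polynomial ℂ) = (X : Polynomial ℂ) ^ 0 from (pow_zero _).symm, wD,
    eTheta_symm_apply_pow, Wser, PowerSeries.coeff_mk]
  norm_num

lemma x_mem_Iaug_sq : phiL 1 - 1 - xiD ∈ Iaug ^ 2 := by
  rw [← xiD_mul_wD, pow_two]
  exact Ideal.mul_mem_mul ((mem_Iaug_iff _).mpr xiD_one) ((mem_Iaug_iff _).mpr wD_one)

/-- The submonoid of elements of `Iaug²` representable with vanishing `L`-functional. -/
def Psub : AddSubmonoid DualP where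
  carrier := {y | y ∈ Iaug ^ 2 ∧ ∃ c, y = RepF c ∧ Lfun c = 0}
  zero_mem' := ⟨Submodule.zero_mem _, 0, (map_zero RepF).symm, map_zero Lfun⟩
  add_mem' := by
    rintro a b ⟨ha1, ca, hca, hla⟩ ⟨hb1, cb, hcb, hlb⟩
    exact ⟨Submodule.add_mem _ ha1 hb1, ca + cb, by rw [map_add, hca, hcb],
      by rw [map_add, hla, hlb, add_zero]⟩

lemma mem_Psub {y : DualP} :
    y ∈ Psub ↔ y ∈ Iaug ^ 2 ∧ ∃ c, y = RepF c ∧ Lfun c = 0 := Iff.rfl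

lemma JpowSet_le_Psub : JpowSet 2 ≤ Psub := by
  rw [JpowSet]
  refine AddSubmonoid.closure_le.mpr ?_
  rintro y ⟨g, hg, rfl⟩
  rw [Fin.prod_univ_two, SetLike.mem_coe, mem_Psub]
  obtain ⟨c0, hc0⟩ := finDual_rep (hg 0).1
  obtain ⟨c1, hc1⟩ := finDual_rep (hg 1).1
  obtain ⟨c, hc, hlc⟩ := RepF_mul c0 c1
  have hg0 : RepF c0 (1 : Polynomial ℂ) = 0 := by rw [← hc0]; exact (hg 0).2
  have hg1 : RepF c1 (1 : Polynomial ℂ) = 0 := by rw [← hc1]; exact (hg 1).2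
  have hl0 : Lfun c = 0 := by rw [hlc, hg0, hg1, zero_mul, mul_zero, add_zero]
  refine ⟨?_, c, ?_, hl0⟩
  · rw [pow_two]
    exact Ideal.mul_mem_mul ((mem_Iaug_iff _).mpr (hg 0).2) ((mem_Iaug_iff _).mpr (hg 1).2)
  · rw [hc0, hc1, hc]

end AuxJ

/-- `φ₁ - ε ∉ J²`, although `φ₁ - ε - ξ ∈ I² ∩ ℂ[X]°`; hence `J² ⊊ I² ∩ ℂ[X]°`.
Here `ε = 1` is the convolution unit, `J` the augmentation ideal of `ℂ[X]°` and `I` that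
of `(ℂ[X])*`. -/
theorem J_squared_strictly_smaller :
    phiL 1 - 1 ∉ JpowSet 2
    ∧ (phiL 1 - 1 - xiD ∈ Iaug ^ 2 ∧ IsFinDual (phiL 1 - 1 - xiD))
    ∧ ((JpowSet 2 : Set DualP) ⊂ {x : DualP | x ∈ Iaug ^ 2 ∧ IsFinDual x}) := by
  have hfd : IsFinDual (phiL 1 - 1 - xiD) := RepF_cstar ▸ RepF_isFinDual cstar
  have hnot2 : phiL 1 - 1 - xiD ∉ JpowSet 2 := by
    intro hmem
    obtain ⟨-, c, hcr, hlc⟩ := JpowSet_le_Psub hmem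
    have hcc : c = cstar := by
      have h0 : RepF (c - cstar) = 0 := by
        rw [map_sub, ← hcr, RepF_cstar, sub_self]
      exact sub_eq_zero.mp (RepF_inj h0)
    rw [hcc, Lfun_cstar] at hlc
    exact one_ne_zero hlc
  have hnot1 : phiL 1 - 1 ∉ JpowSet 2 := by
    intro hmem
    obtain ⟨-, c, hcr, hlc⟩ := JpowSet_le_Psub hmem
    have hcc : c = cstar2 := by
      have h0 : RepF (c - cstar2) = 0 := by
        rw [map_sub, ← hcr, RepF_cstar2, sub_self]
      exact sub_eq_zero.mp (RepF_inj h0)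
    rw [hcc, Lfun_cstar2] at hlc
    exact one_ne_zero hlc
  refine ⟨hnot1, ⟨x_mem_Iaug_sq, hfd⟩, ?_⟩
  rw [Set.ssubset_def]
  constructor
  · intro y hy
    obtain ⟨h1, c, hcr, -⟩ := JpowSet_le_Psub hy
    exact ⟨h1, hcr ▸ RepF_isFinDual c⟩
  · intro hsub
    exact hnot2 (hsub ⟨x_mem_Iaug_sq, hfd⟩)
end

section
/- For every n ≥ 0 there is a linear isomorphism (ℂ[X])*/I^{n+1} ≅ (ℂ[X]_{≤n})*, where ℂ[X]_{≤n} is the space of polynomials of degree at most n; consequently the completion of (ℂ[X])* with respect to the I-adic topology, lim← (ℂ[X])*/I^n, is isomorphic to (ℂ[X])* itself, i.e., (ℂ[X])* is I-adically complete. -/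
open Polynomial PowerSeries Finset

noncomputable section Aux

/-- `eTheta` as a ring equivalence. -/
noncomputable def eThetaRing : DualP ≃+* PowerSeries ℂ :=
  { eTheta with
    map_add' := eTheta_add
    map_mul' := fun f g => eTheta.apply_symm_apply (eTheta f * eTheta g) }

lemma eThetaRing_apply (f : DualP) : eThetaRing f = eTheta f := rfl

lemma map_Iaug : Ideal.map eThetaRing Iaug = Ideal.span {(PowerSeries.X : PowerSeries ℂ)} := by
  ext φ
  rw [Ideal.mem_map_of_equiv, Ideal.mem_span_singleton]
  constructor
  · rintro ⟨f, hf, rfl⟩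
    rw [PowerSeries.X_dvd_iff, eThetaRing_apply, eTheta_apply]
    simpa [mem_Iaug_iff] using hf
  · intro h
    refine ⟨eTheta.symm φ, ?_, by simp [eThetaRing_apply]⟩
    rw [PowerSeries.X_dvd_iff] at h
    rw [mem_Iaug_iff]
    have := eTheta_symm_apply_pow φ 0
    simpa [h] using this

/-- Membership in powers of the augmentation ideal. -/
lemma mem_Iaug_pow (m : ℕ) (f : DualP) :
    f ∈ Iaug ^ m ↔ ∀ k < m, f ((X : Polynomial ℂ) ^ k) = 0 := by
  have h1 : f ∈ Iaug ^ m ↔ eThetaRing f ∈ Ideal.map eThetaRing (Iaug ^ m) :=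
    Ideal.apply_mem_of_equiv_iff.symm
  rw [Ideal.map_pow, map_Iaug, Ideal.span_singleton_pow, Ideal.mem_span_singleton,
    PowerSeries.X_pow_dvd_iff] at h1
  rw [h1]
  constructor
  · intro h k hk
    have := h k hk
    rw [eThetaRing_apply, eTheta_apply, PowerSeries.coeff_mk] at this
    have hn : ((k.factorial : ℂ)) ≠ 0 := by exact_mod_cast Nat.factorial_ne_zero k
    field_simp at this
    simpa using this
  · intro h k hk
    rw [eThetaRing_apply, eTheta_apply, PowerSeries.coeff_mk, h k hk, zero_div]

lemma smul_top_eq' (I : Ideal DualP) : I • (⊤ : Submodule DualP DualP) = I := by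
  rw [smul_eq_mul, Ideal.mul_top]

end Aux

/-- For every `n`, `(ℂ[X])*/Iⁿ⁺¹ ≅ (ℂ[X]_{≤n})*` as ℂ-vector spaces; consequently
`(ℂ[X])*` is `I`-adically complete. -/
theorem dual_adically_complete :
    (∀ n : ℕ,
      Nonempty ((DualP ⧸ (Iaug ^ (n + 1)).restrictScalars ℂ) ≃ₗ[ℂ]
        Module.Dual ℂ (Polynomial.degreeLE ℂ (n : ℕ))))
    ∧ IsAdicComplete Iaug DualP := by
  constructor
  · intro n
    classical
    -- restriction map
    set r : DualP →ₗ[ℂ] Module.Dual ℂ (Polynomial.degreeLE ℂ (n : ℕ)) :=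
      (Submodule.subtype (Polynomial.degreeLE ℂ (n : ℕ))).dualMap with hr
    have hsurj : Function.Surjective r :=
      LinearMap.dualMap_surjective_of_injective (Submodule.injective_subtype _)
    have hker : LinearMap.ker r = (Iaug ^ (n + 1)).restrictScalars ℂ := by
      ext f
      simp only [LinearMap.mem_ker, Submodule.restrictScalars_mem]
      rw [mem_Iaug_pow]
      constructor
      · intro h k hk
        have hmem : ((X : Polynomial ℂ) ^ k) ∈ Polynomial.degreeLE ℂ (n : ℕ) := by
          rw [Polynomial.mem_degreeLE]
          calc ((X : Polynomial ℂ) ^ k).degree ≤ (k : WithBot ℕ) := Polynomial.degree_X_pow_le k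
            _ ≤ (n : WithBot ℕ) := by exact_mod_cast Nat.lt_succ_iff.mp hk
        have := congrFun (congrArg DFunLike.coe h) ⟨_, hmem⟩
        simpa [hr, LinearMap.dualMap_apply] using this
      · intro h
        ext ⟨p, hp⟩
        rw [Polynomial.degreeLE_eq_span_X_pow] at hp
        have hz : ∀ q ∈ ((Finset.range (n + 1)).image fun k => (X : Polynomial ℂ) ^ k : Finset (Polynomial ℂ)), f q = 0 := by
          intro q hq
          obtain ⟨k, hk, rfl⟩ := Finset.mem_image.mp hq
          exact h k (Finset.mem_range.mp hk)
        have : f p = 0 := by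
          refine Submodule.span_induction (p := fun x _ => f x = 0) ?_ ?_ ?_ ?_ hp
          · intro x hx; exact hz x (by exact_mod_cast hx)
          · simp
          · intro x y _ _ hx hy; simp [hx, hy]
          · intro c x _ hx
            rw [map_smul, hx, smul_zero]
        simpa [hr, LinearMap.dualMap_apply] using this
    exact ⟨(Submodule.quotEquivOfEq _ _ hker.symm).trans
      (LinearMap.quotKerEquivOfSurjective r hsurj)⟩
  · refine { toIsHausdorff := ⟨?_⟩, toIsPrecomplete := ⟨?_⟩ }
    · -- Hausdorff
      intro f hf
      refine (Polynomial.basisMonomials ℂ).ext fun k => ?_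
      have hk : f ∈ Iaug ^ (k + 1) := by
        have := hf (k + 1)
        rwa [SModEq.sub_mem, sub_zero, smul_top_eq'] at this
      have := (mem_Iaug_pow (k + 1) f).mp hk k (Nat.lt_succ_self k)
      simpa [coe_basisMonomials, X_pow_eq_monomial] using this
    · -- precomplete
      intro f hf
      refine ⟨Phi fun k => f (k + 1) ((X : Polynomial ℂ) ^ k), fun n => ?_⟩
      rw [SModEq.sub_mem, smul_top_eq', mem_Iaug_pow]
      intro k hk
      have h1 : f (k + 1) - f n ∈ Iaug ^ (k + 1) := by
        have := hf (Nat.succ_le_of_lt hk)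
        rwa [SModEq.sub_mem, smul_top_eq'] at this
      have h2 := (mem_Iaug_pow (k + 1) _).mp h1 k (Nat.lt_succ_self k)
      rw [LinearMap.sub_apply, Phi_apply]
      rw [LinearMap.sub_apply, sub_eq_zero] at h2
      rw [← h2, sub_self]
end
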